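/- Suppose that rcr(K_n)/C(n,4) converges to a real number q̄ as n → ∞. Let (n_k) and (r_k) be sequences of positive integers with n_k → ∞, r_k → ∞, and r_k dividing n_k for every k. Then rcr(K_{n_k}^{r_k}) / C(n_k,4) → q̄ as k → ∞. -/

import Mathlib

/-- A rectilinear drawing: an injective map of the vertices into the plane
with no three vertex images collinear. -/
def IsRectilinearDrawing {V : Type*} (f : V → ℝ × ℝ) : Prop :=
  Function.Injective f ∧
    ∀ a b c : V, a ≠ b → a ≠ c → b ≠ c →
      ¬ Collinear ℝ ({f a, f b, f c} : Set (ℝ × ℝ))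

/-- The open straight-line segment joining the images of the endpoints of an edge. -/
def edgeSeg {V : Type*} (f : V → ℝ × ℝ) : Sym2 V → Set (ℝ × ℝ) :=
  Sym2.lift ⟨fun a b => openSegment ℝ (f a) (f b), fun a b => openSegment_symm ℝ (f a) (f b)⟩

/-- Two edges (with disjoint vertex sets) cross if their open segments meet. -/
def EdgesCross {V : Type*} (f : V → ℝ × ℝ) (e₁ e₂ : Sym2 V) : Prop :=
  (∀ v, v ∈ e₁ → v ∉ e₂) ∧ (edgeSeg f e₁ ∩ edgeSeg f e₂).Nonempty

lemma edgesCross_symm {V : Type*} (f : V → ℝ × ℝ) : Symmetric (EdgesCross f) :=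
  fun _ _ h => ⟨fun v hv hv' => h.1 v hv' hv, by rw [Set.inter_comm]; exact h.2⟩

/-- The crossing number of a drawing: the number of unordered pairs of edges of `G`
that cross in the drawing. -/
noncomputable def crossingNumber {V : Type*} (G : SimpleGraph V) (f : V → ℝ × ℝ) : ℕ :=
  Set.ncard {p : Sym2 (Sym2 V) |
    (∀ e ∈ p, e ∈ G.edgeSet) ∧ p ∈ Sym2.fromRel (r := EdgesCross f) ⟨by intro a b h; exact edgesCross_symm f h⟩}

/-- The rectilinear crossing number of a graph. -/
noncomputable def rcr {V : Type*} (G : SimpleGraph V) : ℕ :=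
  sInf {k | ∃ f : V → ℝ × ℝ, IsRectilinearDrawing f ∧ crossingNumber G f = k}

/-- The complete balanced `r`-partite graph with `r` parts of size `m`. -/
def completeBalanced (r m : ℕ) : SimpleGraph (Fin r × Fin m) :=
  SimpleGraph.comap Prod.fst ⊤

instance (r m : ℕ) : DecidableRel (completeBalanced r m).Adj :=
  fun u v => inferInstanceAs (Decidable (u.1 ≠ v.1))

/-- The balanced layered graph with `r` layers of size `m`: all edges between
consecutive layers. -/
def layeredGraph (r m : ℕ) : SimpleGraph (Fin r × Fin m) where
  Adj u v := u.1.1 + 1 = v.1.1 ∨ v.1.1 + 1 = u.1.1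
  symm := ⟨by intro _ _ h; exact h.symm⟩
  loopless := ⟨by intro u h; cases h <;> omega⟩

instance (r m : ℕ) : DecidableRel (layeredGraph r m).Adj :=
  fun u v => inferInstanceAs (Decidable (u.1.1 + 1 = v.1.1 ∨ v.1.1 + 1 = u.1.1))

/-- The `s`-fold blow-up of a graph `G`. -/
def blowup {V : Type*} (G : SimpleGraph V) (s : ℕ) : SimpleGraph (V × Fin s) :=
  SimpleGraph.comap Prod.fst G

-- === auxiliary development ===


/-- The set of crossing pairs of edges. -/
def crossSet {V : Type*} (G : SimpleGraph V) (f : V → ℝ × ℝ) : Set (Sym2 (Sym2 V)) :=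
  {p : Sym2 (Sym2 V) |
    (∀ e ∈ p, e ∈ G.edgeSet) ∧ p ∈ Sym2.fromRel (r := EdgesCross f) ⟨by intro a b h; exact edgesCross_symm f h⟩}

lemma crossingNumber_eq_ncard {V : Type*} (G : SimpleGraph V) (f : V → ℝ × ℝ) :
    crossingNumber G f = (crossSet G f).ncard := rfl

/-- every finite type admits a rectilinear drawing (points on the parabola) -/
lemma exists_drawing (V : Type*) [Finite V] : ∃ f : V → ℝ × ℝ, IsRectilinearDrawing f := by
  classical
  cases nonempty_fintype V
  set x : V → ℝ := fun v => ((Fintype.equivFin V v : ℕ) : ℝ) with hx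
  have hxinj : Function.Injective x := by
    intro a b h
    exact (Fintype.equivFin V).injective (Fin.ext (Nat.cast_injective h))
  refine ⟨fun v => (x v, x v ^ 2), ?_, ?_⟩
  · intro a b h
    exact hxinj (congrArg Prod.fst h)
  · intro a b c hab hac hbc hcol
    set f : V → ℝ × ℝ := fun v => (x v, x v ^ 2) with hf
    have hfa : f a ∈ ({f a, f b, f c} : Set (ℝ × ℝ)) := by simp
    rw [collinear_iff_of_mem hfa] at hcol
    obtain ⟨v, hv⟩ := hcol
    obtain ⟨tb, htb⟩ := hv (f b) (by simp)
    obtain ⟨tc, htc⟩ := hv (f c) (by simp)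
    have hxab : x a ≠ x b := fun h => hab (hxinj h)
    have hxac : x a ≠ x c := fun h => hac (hxinj h)
    have hxbc : x b ≠ x c := fun h => hbc (hxinj h)
    have hb1 : x b = tb * v.1 + x a := congrArg Prod.fst htb
    have hb2 : x b ^ 2 = tb * v.2 + x a ^ 2 := congrArg Prod.snd htb
    have hc1 : x c = tc * v.1 + x a := congrArg Prod.fst htc
    have hc2 : x c ^ 2 = tc * v.2 + x a ^ 2 := congrArg Prod.snd htc
    have htb0 : tb ≠ 0 := by
      intro h; rw [h] at hb1 hb2; simp at hb1; exact hxab hb1.symm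
    have htc0 : tc ≠ 0 := by
      intro h; rw [h] at hc1 hc2; simp at hc1; exact hxac hc1.symm
    -- tc*(xb - xa) = tb*(xc - xa), tc*(xb²-xa²) = tb*(xc²-xa²)
    have e1 : tc * (x b - x a) = tb * (x c - x a) := by
      rw [hb1, hc1]; ring
    have e2 : tc * (x b - x a) * (x b + x a) = tb * (x c - x a) * (x c + x a) := by
      have : tc * (x b ^ 2 - x a ^ 2) = tb * (x c ^ 2 - x a ^ 2) := by
        rw [hb2, hc2]; ring
      nlinarith [this]
    rw [e1] at e2
    have hfac : tb * (x c - x a) ≠ 0 :=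
      mul_ne_zero htb0 (sub_ne_zero.mpr (Ne.symm hxac))
    have : x b + x a = x c + x a := mul_left_cancel₀ hfac e2
    exact hxbc (by linarith)

section Basic
variable {V W : Type*}

lemma rcr_le_crossingNumber (G : SimpleGraph V) {f : V → ℝ × ℝ}
    (hf : IsRectilinearDrawing f) : rcr G ≤ crossingNumber G f :=
  Nat.sInf_le ⟨f, hf, rfl⟩

lemma exists_optimal (G : SimpleGraph V) [Finite V] :
    ∃ f : V → ℝ × ℝ, IsRectilinearDrawing f ∧ crossingNumber G f = rcr G := by
  obtain ⟨f, hf⟩ := exists_drawing V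
  have : rcr G ∈ {k | ∃ f : V → ℝ × ℝ, IsRectilinearDrawing f ∧ crossingNumber G f = k} :=
    Nat.sInf_mem ⟨crossingNumber G f, f, hf, rfl⟩
  exact this

lemma edgeSeg_map (f : W → ℝ × ℝ) (ι : V → W) (e : Sym2 V) :
    edgeSeg f (Sym2.map ι e) = edgeSeg (f ∘ ι) e := by
  induction e using Sym2.ind with
  | _ a b => rfl

lemma edgesCross_map (f : W → ℝ × ℝ) {ι : V → W} (hι : Function.Injective ι)
    (e₁ e₂ : Sym2 V) (h : EdgesCross (f ∘ ι) e₁ e₂) :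
    EdgesCross f (Sym2.map ι e₁) (Sym2.map ι e₂) := by
  obtain ⟨hdisj, hne⟩ := h
  constructor
  · intro v hv hv'
    rw [Sym2.mem_map] at hv hv'
    obtain ⟨a, ha, rfl⟩ := hv
    obtain ⟨b, hb, hba⟩ := hv'
    exact hdisj a ha (hι hba ▸ hb)
  · rwa [edgeSeg_map, edgeSeg_map]

/-- mapping a crossing pair along an injective graph map lands in the crossing set. -/
lemma crossSet_map (G : SimpleGraph V) (H : SimpleGraph W) (f : W → ℝ × ℝ)
    {ι : V → W} (hι : Function.Injective ι)
    (hadj : ∀ a b, G.Adj a b → H.Adj (ι a) (ι b))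
    {p : Sym2 (Sym2 V)} (hp : p ∈ crossSet G (f ∘ ι)) :
    Sym2.map (Sym2.map ι) p ∈ crossSet H f := by
  induction p using Sym2.ind with
  | _ e₁ e₂ =>
    obtain ⟨hedge, hrel⟩ := hp
    rw [Sym2.map_pair_eq]
    constructor
    · intro e he
      rw [Sym2.mem_iff] at he
      have key : ∀ e' : Sym2 V, e' ∈ G.edgeSet → Sym2.map ι e' ∈ H.edgeSet := by
        intro e' he'
        induction e' using Sym2.ind with
        | _ a b =>
          rw [Sym2.map_pair_eq]
          exact (SimpleGraph.mem_edgeSet H).mpr (hadj a b ((SimpleGraph.mem_edgeSet G).mp he'))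
      rcases he with rfl | rfl
      · exact key e₁ (hedge e₁ (Sym2.mem_iff.mpr (Or.inl rfl)))
      · exact key e₂ (hedge e₂ (Sym2.mem_iff.mpr (Or.inr rfl)))
    · rw [Sym2.fromRel_prop]
      exact edgesCross_map f hι e₁ e₂ (Sym2.fromRel_prop.mp hrel)

lemma crossingNumber_le_of_map (G : SimpleGraph V) (H : SimpleGraph W) (f : W → ℝ × ℝ)
    {ι : V → W} (hι : Function.Injective ι)
    (hadj : ∀ a b, G.Adj a b → H.Adj (ι a) (ι b)) [Finite W] :
    crossingNumber G (f ∘ ι) ≤ crossingNumber H f := by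
  rw [crossingNumber_eq_ncard, crossingNumber_eq_ncard]
  have hinj : Function.Injective (Sym2.map (Sym2.map ι) :
      Sym2 (Sym2 V) → Sym2 (Sym2 W)) :=
    Sym2.map.injective (Sym2.map.injective hι)
  calc (crossSet G (f ∘ ι)).ncard
      = (Sym2.map (Sym2.map ι) '' crossSet G (f ∘ ι)).ncard :=
        (Set.ncard_image_of_injective _ hinj).symm
    _ ≤ (crossSet H f).ncard := by
        apply Set.ncard_le_ncard _ (Set.toFinite _)
        rintro _ ⟨p, hp, rfl⟩
        exact crossSet_map G H f hι hadj hp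

lemma drawing_comp {f : W → ℝ × ℝ} (hf : IsRectilinearDrawing f)
    {ι : V → W} (hι : Function.Injective ι) : IsRectilinearDrawing (f ∘ ι) := by
  refine ⟨hf.1.comp hι, fun a b c hab hac hbc => ?_⟩
  exact hf.2 (ι a) (ι b) (ι c) (fun h => hab (hι h)) (fun h => hac (hι h))
    (fun h => hbc (hι h))

lemma rcr_le_of_map [Finite V] [Finite W] (G : SimpleGraph V) (H : SimpleGraph W)
    {ι : V → W} (hι : Function.Injective ι)
    (hadj : ∀ a b, G.Adj a b → H.Adj (ι a) (ι b)) :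
    rcr G ≤ rcr H := by
  obtain ⟨f, hf, hcross⟩ := exists_optimal H
  calc rcr G ≤ crossingNumber G (f ∘ ι) := rcr_le_crossingNumber G (drawing_comp hf hι)
    _ ≤ crossingNumber H f := crossingNumber_le_of_map G H f hι hadj
    _ = rcr H := hcross

lemma rcr_top_congr (e : V ≃ W) [Finite V] [Finite W] :
    rcr (⊤ : SimpleGraph V) = rcr (⊤ : SimpleGraph W) := by
  apply le_antisymm
  · exact rcr_le_of_map _ _ e.injective (fun a b h => by
      simpa using fun hh => h (e.injective hh))
  · exact rcr_le_of_map _ _ e.symm.injective (fun a b h => by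
      simpa using fun hh => h (e.symm.injective hh))

end Basic

lemma crossSet_top_vertices {V : Type*} [DecidableEq V] {f : V → ℝ × ℝ}
    {p : Sym2 (Sym2 V)} (hp : p ∈ crossSet (⊤ : SimpleGraph V) f) :
    ∃ s : Finset V, s.card = 4 ∧ ∀ i ∈ s, ∃ e ∈ p, i ∈ e := by
  induction p using Sym2.ind with
  | _ e₁ e₂ =>
    obtain ⟨hedge, hrel⟩ := hp
    have hcross : EdgesCross f e₁ e₂ := Sym2.fromRel_prop.mp hrel
    induction e₁ using Sym2.ind with
    | _ a b =>
      induction e₂ using Sym2.ind with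
      | _ c d =>
        have hab : a ≠ b := by
          have := hedge s(a, b) (Sym2.mem_iff.mpr (Or.inl rfl))
          exact (SimpleGraph.mem_edgeSet _).mp this
        have hcd : c ≠ d := by
          have := hedge s(c, d) (Sym2.mem_iff.mpr (Or.inr rfl))
          exact (SimpleGraph.mem_edgeSet _).mp this
        have hdisj := hcross.1
        have hac : a ≠ c := fun h =>
          hdisj a (Sym2.mem_iff.mpr (Or.inl rfl)) (Sym2.mem_iff.mpr (Or.inl h))
        have had : a ≠ d := fun h =>
          hdisj a (Sym2.mem_iff.mpr (Or.inl rfl)) (Sym2.mem_iff.mpr (Or.inr h))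
        have hbc : b ≠ c := fun h =>
          hdisj b (Sym2.mem_iff.mpr (Or.inr rfl)) (Sym2.mem_iff.mpr (Or.inl h))
        have hbd : b ≠ d := fun h =>
          hdisj b (Sym2.mem_iff.mpr (Or.inr rfl)) (Sym2.mem_iff.mpr (Or.inr h))
        refine ⟨{a, b, c, d}, ?_, ?_⟩
        · rw [Finset.card_insert_of_notMem (by simp [hab, hac, had]),
            Finset.card_insert_of_notMem (by simp [hbc, hbd]),
            Finset.card_insert_of_notMem (by simp [hcd]), Finset.card_singleton]
        · intro i hi
          simp only [Finset.mem_insert, Finset.mem_singleton] at hi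
          rcases hi with rfl | rfl | rfl | rfl
          · exact ⟨s(i, b), Sym2.mem_iff.mpr (Or.inl rfl), Sym2.mem_iff.mpr (Or.inl rfl)⟩
          · exact ⟨s(a, i), Sym2.mem_iff.mpr (Or.inl rfl), Sym2.mem_iff.mpr (Or.inr rfl)⟩
          · exact ⟨s(i, d), Sym2.mem_iff.mpr (Or.inr rfl), Sym2.mem_iff.mpr (Or.inl rfl)⟩
          · exact ⟨s(c, i), Sym2.mem_iff.mpr (Or.inr rfl), Sym2.mem_iff.mpr (Or.inr rfl)⟩

lemma lower_bound (r m : ℕ) (hr : 4 ≤ r) (hm : 0 < m) :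
    m ^ 4 * rcr (⊤ : SimpleGraph (Fin r)) ≤ rcr (completeBalanced r m) := by
  classical
  obtain ⟨f, hf, hcross⟩ := exists_optimal (completeBalanced r m)
  set ι : (Fin r → Fin m) → Fin r → Fin r × Fin m := fun t i => (i, t i) with hιdef
  have hιinj : ∀ t, Function.Injective (ι t) := fun t a b h => congrArg Prod.fst h
  set X : (Fin r → Fin m) → Finset (Sym2 (Sym2 (Fin r))) :=
    fun t => (Set.toFinite (crossSet (⊤ : SimpleGraph (Fin r)) (f ∘ ι t))).toFinset with hX
  set Y : Finset (Sym2 (Sym2 (Fin r × Fin m))) :=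
    (Set.toFinite (crossSet (completeBalanced r m) f)).toFinset with hY
  set S : Finset ((_ : Fin r → Fin m) × Sym2 (Sym2 (Fin r))) :=
    Finset.univ.sigma X with hS
  set F : ((_ : Fin r → Fin m) × Sym2 (Sym2 (Fin r))) → Sym2 (Sym2 (Fin r × Fin m)) :=
    fun x => Sym2.map (Sym2.map (ι x.1)) x.2 with hF
  -- retraction
  have hretr : ∀ (t : Fin r → Fin m) (p : Sym2 (Sym2 (Fin r))),
      Sym2.map (Sym2.map Prod.fst) (Sym2.map (Sym2.map (ι t)) p) = p := by
    intro t p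
    induction p using Sym2.ind with
    | _ e₁ e₂ =>
      induction e₁ using Sym2.ind with
      | _ a b =>
        induction e₂ using Sym2.ind with
        | _ c d => simp [Sym2.map_pair_eq, hιdef]
  -- second coordinates of vertices of F x are given by x.1
  have hsecond : ∀ (x : (_ : Fin r → Fin m) × Sym2 (Sym2 (Fin r))) (i : Fin r) (y : Fin m),
      (∃ e ∈ F x, (i, y) ∈ e) → y = x.1 i := by
    rintro ⟨t, p⟩ i y ⟨e, he, hv⟩
    simp only [hF, Sym2.mem_map] at he
    obtain ⟨e', _, rfl⟩ := he
    rw [Sym2.mem_map] at hv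
    obtain ⟨a, _, ha⟩ := hv
    have h1 : a = i := congrArg Prod.fst ha
    have h2 : t a = y := congrArg Prod.snd ha
    rw [← h2, h1]
  -- step 1 : m^r * rcr(K_r) ≤ S.card
  have step1 : m ^ r * rcr (⊤ : SimpleGraph (Fin r)) ≤ S.card := by
    rw [hS, Finset.card_sigma]
    have : ∀ t : Fin r → Fin m, rcr (⊤ : SimpleGraph (Fin r)) ≤ (X t).card := by
      intro t
      have h1 : (X t).card = crossingNumber (⊤ : SimpleGraph (Fin r)) (f ∘ ι t) := by
        rw [hX, crossingNumber_eq_ncard, Set.ncard_eq_toFinset_card]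
      rw [h1]
      exact rcr_le_crossingNumber _ (drawing_comp hf (hιinj t))
    calc m ^ r * rcr (⊤ : SimpleGraph (Fin r))
        = ∑ _t : Fin r → Fin m, rcr (⊤ : SimpleGraph (Fin r)) := by
          rw [Finset.sum_const, Finset.card_univ, Fintype.card_fun]
          simp [smul_eq_mul]
      _ ≤ ∑ t : Fin r → Fin m, (X t).card := Finset.sum_le_sum (fun t _ => this t)
  -- fiber bound
  have fiber : ∀ q ∈ S.image F, (S.filter (fun x => F x = q)).card ≤ m ^ (r - 4) := by
    intro q hq
    obtain ⟨x₀, hx₀S, hx₀⟩ := Finset.mem_image.mp hq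
    -- the finite set of first coordinates of vertices of q
    set A : Finset (Fin r) :=
      (Set.toFinite {i : Fin r | ∃ y : Fin m, ∃ e ∈ q, (i, y) ∈ e}).toFinset with hA
    have hmemA : ∀ i : Fin r, i ∈ A ↔ ∃ y : Fin m, ∃ e ∈ q, (i, y) ∈ e := by
      intro i; rw [hA, Set.Finite.mem_toFinset]; rfl
    -- A has at least 4 elements
    have hA4 : 4 ≤ A.card := by
      have hpX : x₀.2 ∈ crossSet (⊤ : SimpleGraph (Fin r)) (f ∘ ι x₀.1) := by
        have := (Finset.mem_sigma.mp hx₀S).2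
        rwa [hX, Set.Finite.mem_toFinset] at this
      obtain ⟨s, hs4, hsmem⟩ := crossSet_top_vertices hpX
      have hsub : s ⊆ A := by
        intro i hi
        obtain ⟨e, he, hie⟩ := hsmem i hi
        rw [hmemA]
        refine ⟨x₀.1 i, Sym2.map (ι x₀.1) e, ?_, ?_⟩
        · rw [← hx₀, hF, Sym2.mem_map]
          exact ⟨e, he, rfl⟩
        · rw [Sym2.mem_map]
          exact ⟨i, hie, rfl⟩
      calc 4 = s.card := hs4.symm
        _ ≤ A.card := Finset.card_le_card hsub
    -- members of the fiber agree on A and have determined second component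
    have hagree : ∀ x ∈ S.filter (fun x => F x = q), ∀ i ∈ A, x.1 i = x₀.1 i := by
      intro x hx i hi
      obtain ⟨y, e, he, hv⟩ := (hmemA i).mp hi
      have h1 : y = x.1 i := hsecond x i y (by
        rw [(Finset.mem_filter.mp hx).2]; exact ⟨e, he, hv⟩)
      have h2 : y = x₀.1 i := hsecond x₀ i y (by rw [hx₀]; exact ⟨e, he, hv⟩)
      rw [← h1, ← h2]
    have hsnd : ∀ x ∈ S.filter (fun x => F x = q),
        x.2 = Sym2.map (Sym2.map Prod.fst) q := by
      intro x hx
      rw [← (Finset.mem_filter.mp hx).2, hF, hretr]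
    -- injection into functions on the complement of A
    have hinj : Set.InjOn (fun (x : (_ : Fin r → Fin m) × Sym2 (Sym2 (Fin r)))
        (j : {i // i ∈ Aᶜ}) => x.1 j.1) (S.filter (fun x => F x = q)) := by
      intro x hx x' hx' hψ
      obtain ⟨t, p⟩ := x
      obtain ⟨t', p'⟩ := x'
      have ht : t = t' := by
        funext i
        by_cases hiA : i ∈ A
        · exact (hagree ⟨t, p⟩ (Finset.mem_coe.mp hx) i hiA).trans
            (hagree ⟨t', p'⟩ (Finset.mem_coe.mp hx') i hiA).symm
        · exact congrFun hψ ⟨i, Finset.mem_compl.mpr hiA⟩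
      have hp : p = p' := by
        exact (hsnd ⟨t, p⟩ (Finset.mem_coe.mp hx)).trans
          (hsnd ⟨t', p'⟩ (Finset.mem_coe.mp hx')).symm
      subst ht; subst hp; rfl
    calc (S.filter (fun x => F x = q)).card
        ≤ (Finset.univ : Finset ({i // i ∈ Aᶜ} → Fin m)).card :=
          Finset.card_le_card_of_injOn _ (fun _ _ => Finset.mem_univ _) hinj
      _ = m ^ (Aᶜ : Finset (Fin r)).card := by
          rw [Finset.card_univ, Fintype.card_fun]
          simp [Fintype.card_coe, Finset.card_compl]
      _ ≤ m ^ (r - 4) := by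
          apply Nat.pow_le_pow_right hm
          rw [Finset.card_compl]
          simp only [Fintype.card_fin]
          omega
  -- step 2 : S.card ≤ m^(r-4) * Y.card
  have himg : S.image F ⊆ Y := by
    intro q hq
    obtain ⟨x, hxS, rfl⟩ := Finset.mem_image.mp hq
    have hpX : x.2 ∈ crossSet (⊤ : SimpleGraph (Fin r)) (f ∘ ι x.1) := by
      have := (Finset.mem_sigma.mp hxS).2
      rwa [hX, Set.Finite.mem_toFinset] at this
    rw [hY, Set.Finite.mem_toFinset]
    exact crossSet_map _ _ f (hιinj x.1)
      (fun a b hab => by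
        simp only [completeBalanced, SimpleGraph.comap_adj, SimpleGraph.top_adj]
        exact hab.ne) hpX
  have step2 : S.card ≤ m ^ (r - 4) * Y.card := by
    calc S.card ≤ m ^ (r - 4) * (S.image F).card :=
          Finset.card_le_mul_card_image S (m ^ (r - 4)) fiber
      _ ≤ m ^ (r - 4) * Y.card :=
          Nat.mul_le_mul_left _ (Finset.card_le_card himg)
  have hYcard : Y.card = rcr (completeBalanced r m) := by
    rw [hY, ← Set.ncard_eq_toFinset_card, ← crossingNumber_eq_ncard, hcross]
  have key : m ^ r * rcr (⊤ : SimpleGraph (Fin r)) ≤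
      m ^ (r - 4) * rcr (completeBalanced r m) := by
    rw [← hYcard]; exact le_trans step1 step2
  have hsplit : m ^ r = m ^ (r - 4) * m ^ 4 := by
    rw [← pow_add]; congr 1; omega
  rw [hsplit, mul_assoc] at key
  exact Nat.le_of_mul_le_mul_left key (Nat.pow_pos hm)

lemma upper_bound (r m : ℕ) :
    rcr (completeBalanced r m) ≤ rcr (⊤ : SimpleGraph (Fin (r * m))) := by
  have h1 : rcr (completeBalanced r m) ≤ rcr (⊤ : SimpleGraph (Fin r × Fin m)) :=
    rcr_le_of_map _ _ (fun a b h => h) (fun a b hab => by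
      simp only [SimpleGraph.top_adj]
      intro h; rw [h] at hab
      exact (completeBalanced r m).loopless.irrefl b hab)
  have h2 : rcr (⊤ : SimpleGraph (Fin r × Fin m)) = rcr (⊤ : SimpleGraph (Fin (r * m))) :=
    rcr_top_congr finProdFinEquiv
  omega

lemma choose4_real {n : ℕ} (h : 4 ≤ n) :
    ((n.choose 4 : ℕ) : ℝ) * 24 = (n : ℝ) * ((n : ℝ) - 1) * ((n : ℝ) - 2) * ((n : ℝ) - 3) := by
  have hd : n.descFactorial 4 = 24 * n.choose 4 := by
    rw [Nat.descFactorial_eq_factorial_mul_choose]; norm_num [Nat.factorial]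
  have hdf : n.descFactorial 4 = (n - 3) * ((n - 2) * ((n - 1) * n)) := by
    simp [Nat.descFactorial]
  have hcast : ((n.descFactorial 4 : ℕ) : ℝ)
      = ((n : ℝ) - 3) * (((n : ℝ) - 2) * (((n : ℝ) - 1) * (n : ℝ))) := by
    rw [hdf]
    push_cast [Nat.cast_sub (by omega : 3 ≤ n), Nat.cast_sub (by omega : 2 ≤ n),
      Nat.cast_sub (by omega : 1 ≤ n)]
    ring
  have : ((24 * n.choose 4 : ℕ) : ℝ)
      = ((n : ℝ) - 3) * (((n : ℝ) - 2) * (((n : ℝ) - 1) * (n : ℝ))) := by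
    rw [← hd]; exact hcast
  push_cast at this
  linarith [this]

lemma prod4_le {a1 a2 a3 a4 b1 b2 b3 b4 : ℝ}
    (n1 : 0 ≤ a1) (n2 : 0 ≤ a2) (n3 : 0 ≤ a3) (n4 : 0 ≤ a4)
    (h1 : a1 ≤ b1) (h2 : a2 ≤ b2) (h3 : a3 ≤ b3) (h4 : a4 ≤ b4) :
    a1 * a2 * a3 * a4 ≤ b1 * b2 * b3 * b4 := by
  have s12 : a1 * a2 ≤ b1 * b2 := mul_le_mul h1 h2 n2 (n1.trans h1)
  have s123 : a1 * a2 * a3 ≤ b1 * b2 * b3 :=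
    mul_le_mul s12 h3 n3 (mul_nonneg (n1.trans h1) (n2.trans h2))
  exact mul_le_mul s123 h4 n4
    (mul_nonneg (mul_nonneg (n1.trans h1) (n2.trans h2)) (n3.trans h3))

lemma choose_ineq1 {r m : ℕ} (hr : 4 ≤ r) (hm : 1 ≤ m) :
    (m : ℝ) ^ 4 * ((r.choose 4 : ℕ) : ℝ) ≤ (((r * m).choose 4 : ℕ) : ℝ) := by
  have hn : 4 ≤ r * m := le_trans hr (Nat.le_mul_of_pos_right r hm)
  have eR := choose4_real hr
  have eN := choose4_real hn
  set R : ℝ := (r : ℝ) with hR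
  set M : ℝ := (m : ℝ) with hM
  have hNRM : ((r * m : ℕ) : ℝ) = R * M := by push_cast; ring
  rw [hNRM] at eN
  have hR4 : (4 : ℝ) ≤ R := by rw [hR]; exact_mod_cast hr
  have hM1 : (1 : ℝ) ≤ M := by rw [hM]; exact_mod_cast hm
  have hMR : R ≤ M * R := by nlinarith
  have key : (M * R) * (M * (R - 1)) * (M * (R - 2)) * (M * (R - 3))
      ≤ (M * R) * (M * R - 1) * (M * R - 2) * (M * R - 3) := by
    apply prod4_le
    · nlinarith
    · nlinarith
    · nlinarith
    · nlinarith
    · nlinarith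
    · nlinarith
    · nlinarith
    · nlinarith
  have h24 : (0 : ℝ) < 24 := by norm_num
  apply le_of_mul_le_mul_right _ h24
  calc (M : ℝ) ^ 4 * ((r.choose 4 : ℕ) : ℝ) * 24
      = M ^ 4 * (((r.choose 4 : ℕ) : ℝ) * 24) := by ring
    _ = M ^ 4 * (R * (R - 1) * (R - 2) * (R - 3)) := by rw [eR]
    _ = (M * R) * (M * (R - 1)) * (M * (R - 2)) * (M * (R - 3)) := by ring
    _ ≤ (M * R) * (M * R - 1) * (M * R - 2) * (M * R - 3) := key
    _ = R * M * (R * M - 1) * (R * M - 2) * (R * M - 3) := by ring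
    _ = (((r * m).choose 4 : ℕ) : ℝ) * 24 := eN.symm

lemma choose_ineq2 {r m : ℕ} (hr : 4 ≤ r) (hm : 1 ≤ m) :
    ((r : ℝ) - 3) ^ 4 * (((r * m).choose 4 : ℕ) : ℝ)
      ≤ (m : ℝ) ^ 4 * ((r.choose 4 : ℕ) : ℝ) * (r : ℝ) ^ 4 := by
  have hn : 4 ≤ r * m := le_trans hr (Nat.le_mul_of_pos_right r hm)
  have eR := choose4_real hr
  have eN := choose4_real hn
  set R : ℝ := (r : ℝ) with hR
  set M : ℝ := (m : ℝ) with hM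
  have hNRM : ((r * m : ℕ) : ℝ) = R * M := by push_cast; ring
  rw [hNRM] at eN
  have hR4 : (4 : ℝ) ≤ R := by rw [hR]; exact_mod_cast hr
  have hM1 : (1 : ℝ) ≤ M := by rw [hM]; exact_mod_cast hm
  have hMR : R ≤ M * R := by nlinarith
  have key : ((R - 3) * (R * M)) * ((R - 3) * (R * M - 1)) * ((R - 3) * (R * M - 2))
        * ((R - 3) * (R * M - 3))
      ≤ (R * (M * R)) * (R * (M * (R - 1))) * (R * (M * (R - 2))) * (R * (M * (R - 3))) := by
    apply prod4_le
    · nlinarith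
    · nlinarith
    · nlinarith
    · nlinarith
    · nlinarith
    · nlinarith
    · nlinarith
    · nlinarith
  have h24 : (0 : ℝ) < 24 := by norm_num
  apply le_of_mul_le_mul_right _ h24
  calc (R - 3) ^ 4 * (((r * m).choose 4 : ℕ) : ℝ) * 24
      = (R - 3) ^ 4 * ((((r * m).choose 4 : ℕ) : ℝ) * 24) := by ring
    _ = (R - 3) ^ 4 * (R * M * (R * M - 1) * (R * M - 2) * (R * M - 3)) := by rw [eN]
    _ = ((R - 3) * (R * M)) * ((R - 3) * (R * M - 1)) * ((R - 3) * (R * M - 2))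
        * ((R - 3) * (R * M - 3)) := by ring
    _ ≤ (R * (M * R)) * (R * (M * (R - 1))) * (R * (M * (R - 2))) * (R * (M * (R - 3))) := key
    _ = M ^ 4 * (R * (R - 1) * (R - 2) * (R - 3)) * R ^ 4 := by ring
    _ = M ^ 4 * (((r.choose 4 : ℕ) : ℝ) * 24) * R ^ 4 := by rw [eR]
    _ = M ^ 4 * ((r.choose 4 : ℕ) : ℝ) * R ^ 4 * 24 := by ring

/-- if `rcr(K_n)/C(n,4) → q̄`, then for sequences `n_k → ∞`, `r_k → ∞` with
`r_k ∣ n_k`, one has `rcr(K_{n_k}^{r_k})/C(n_k,4) → q̄`. -/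
theorem stmt8 (q : ℝ)
    (hq : Filter.Tendsto
      (fun n : ℕ => (rcr (⊤ : SimpleGraph (Fin n)) : ℝ) / ((n.choose 4 : ℕ) : ℝ))
      Filter.atTop (nhds q))
    (nk rk : ℕ → ℕ) (hnpos : ∀ k, 0 < nk k) (hrpos : ∀ k, 0 < rk k)
    (hn : Filter.Tendsto nk Filter.atTop Filter.atTop)
    (hr : Filter.Tendsto rk Filter.atTop Filter.atTop)
    (hdvd : ∀ k, rk k ∣ nk k) :
    Filter.Tendsto
      (fun k => (rcr (completeBalanced (rk k) (nk k / rk k)) : ℝ) / (((nk k).choose 4 : ℕ) : ℝ))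
      Filter.atTop (nhds q) := by
  have hm1 : ∀ k, 1 ≤ nk k / rk k := fun k =>
    (Nat.one_le_div_iff (hrpos k)).mpr (Nat.le_of_dvd (hnpos k) (hdvd k))
  have hnrm : ∀ k, nk k = rk k * (nk k / rk k) := fun k => (Nat.mul_div_cancel' (hdvd k)).symm
  have hev4 : ∀ᶠ k in Filter.atTop, 4 ≤ rk k := hr.eventually_ge_atTop 4
  have hCnpos : ∀ k, 4 ≤ rk k → (0 : ℝ) < (((nk k).choose 4 : ℕ) : ℝ) := by
    intro k h4
    have : 4 ≤ nk k := le_trans h4 (Nat.le_of_dvd (hnpos k) (hdvd k))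
    exact_mod_cast Nat.choose_pos this
  have hCrpos : ∀ k, 4 ≤ rk k → (0 : ℝ) < (((rk k).choose 4 : ℕ) : ℝ) := by
    intro k h4; exact_mod_cast Nat.choose_pos h4
  -- upper comparison sequence
  have hU : Filter.Tendsto
      (fun k => (rcr (⊤ : SimpleGraph (Fin (nk k))) : ℝ) / (((nk k).choose 4 : ℕ) : ℝ))
      Filter.atTop (nhds q) := hq.comp hn
  have hup : ∀ᶠ k in Filter.atTop,
      (rcr (completeBalanced (rk k) (nk k / rk k)) : ℝ) / (((nk k).choose 4 : ℕ) : ℝ)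
        ≤ (rcr (⊤ : SimpleGraph (Fin (nk k))) : ℝ) / (((nk k).choose 4 : ℕ) : ℝ) := by
    filter_upwards [hev4] with k h4
    have hnum : rcr (completeBalanced (rk k) (nk k / rk k))
        ≤ rcr (⊤ : SimpleGraph (Fin (nk k))) := by
      have h1 := upper_bound (rk k) (nk k / rk k)
      have h2 : rcr (⊤ : SimpleGraph (Fin (rk k * (nk k / rk k))))
          = rcr (⊤ : SimpleGraph (Fin (nk k))) :=
        rcr_top_congr (finCongr (hnrm k).symm)
      omega
    gcongr
  -- lower comparison sequence
  have hB : Filter.Tendsto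
      (fun k => (rcr (⊤ : SimpleGraph (Fin (rk k))) : ℝ) / (((rk k).choose 4 : ℕ) : ℝ))
      Filter.atTop (nhds q) := hq.comp hr
  -- the correction factor tends to 1
  have hrR : Filter.Tendsto (fun k => (rk k : ℝ)) Filter.atTop Filter.atTop :=
    tendsto_natCast_atTop_atTop.comp hr
  have hd : Filter.Tendsto (fun k => (((rk k : ℝ) - 3) / (rk k : ℝ)) ^ 4)
      Filter.atTop (nhds 1) := by
    have h3 : Filter.Tendsto (fun k => 3 / (rk k : ℝ)) Filter.atTop (nhds 0) :=
      tendsto_const_nhds.div_atTop hrR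
    have base : Filter.Tendsto (fun k => 1 - 3 / (rk k : ℝ)) Filter.atTop (nhds 1) := by
      simpa using tendsto_const_nhds.sub h3
    have hpow : Filter.Tendsto (fun k => (1 - 3 / (rk k : ℝ)) ^ 4) Filter.atTop (nhds 1) := by
      simpa using base.pow 4
    apply hpow.congr'
    filter_upwards [hev4] with k h4
    have hRne : (rk k : ℝ) ≠ 0 := by
      have : (0:ℝ) < (rk k : ℝ) := by exact_mod_cast hrpos k
      linarith
    have : 1 - 3 / (rk k : ℝ) = ((rk k : ℝ) - 3) / (rk k : ℝ) := by field_simp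
    rw [this]
  have hc : Filter.Tendsto
      (fun k => ((nk k / rk k : ℕ) : ℝ) ^ 4 * (((rk k).choose 4 : ℕ) : ℝ)
        / (((nk k).choose 4 : ℕ) : ℝ)) Filter.atTop (nhds 1) := by
    apply tendsto_of_tendsto_of_tendsto_of_le_of_le' hd tendsto_const_nhds
    · filter_upwards [hev4] with k h4
      have hRpos : (0:ℝ) < (rk k : ℝ) := by exact_mod_cast hrpos k
      rw [div_pow, div_le_div_iff₀ (by positivity) (hCnpos k h4)]
      have := choose_ineq2 h4 (hm1 k)
      rw [← hnrm k] at this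
      calc ((rk k : ℝ) - 3) ^ 4 * (((nk k).choose 4 : ℕ) : ℝ)
          ≤ ((nk k / rk k : ℕ) : ℝ) ^ 4 * (((rk k).choose 4 : ℕ) : ℝ) * (rk k : ℝ) ^ 4 :=
            this
        _ = ((nk k / rk k : ℕ) : ℝ) ^ 4 * (((rk k).choose 4 : ℕ) : ℝ) * ((rk k : ℝ)) ^ 4 := by
            ring
    · filter_upwards [hev4] with k h4
      rw [div_le_one (hCnpos k h4)]
      have := choose_ineq1 h4 (hm1 k)
      rwa [← hnrm k] at this
  -- lower bound sequence tends to q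
  have hL : Filter.Tendsto
      (fun k => (((nk k / rk k) ^ 4 * rcr (⊤ : SimpleGraph (Fin (rk k))) : ℕ) : ℝ)
        / (((nk k).choose 4 : ℕ) : ℝ)) Filter.atTop (nhds q) := by
    have hmul : Filter.Tendsto
        (fun k => ((rcr (⊤ : SimpleGraph (Fin (rk k))) : ℝ) / (((rk k).choose 4 : ℕ) : ℝ))
          * (((nk k / rk k : ℕ) : ℝ) ^ 4 * (((rk k).choose 4 : ℕ) : ℝ)
            / (((nk k).choose 4 : ℕ) : ℝ)))
        Filter.atTop (nhds q) := by
      simpa using hB.mul hc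
    apply hmul.congr'
    filter_upwards [hev4] with k h4
    have h1 : (((rk k).choose 4 : ℕ) : ℝ) ≠ 0 := ne_of_gt (hCrpos k h4)
    have h2 : (((nk k).choose 4 : ℕ) : ℝ) ≠ 0 := ne_of_gt (hCnpos k h4)
    push_cast
    field_simp
  have hlow : ∀ᶠ k in Filter.atTop,
      (((nk k / rk k) ^ 4 * rcr (⊤ : SimpleGraph (Fin (rk k))) : ℕ) : ℝ)
        / (((nk k).choose 4 : ℕ) : ℝ)
      ≤ (rcr (completeBalanced (rk k) (nk k / rk k)) : ℝ) / (((nk k).choose 4 : ℕ) : ℝ) := by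
    filter_upwards [hev4] with k h4
    have hnum := lower_bound (rk k) (nk k / rk k) h4 (hm1 k)
    gcongr
  exact tendsto_of_tendsto_of_tendsto_of_le_of_le' hL hU hlow hup
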